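/- Suppose the metrics g and ĝ on U satisfy g = ĝλ for a smooth matrix-valued field λ, P is a g-orthogonal projection, and the kinetic-energy matching condition P(∇_X X − ∇̂_X X) = 0 holds at every point of U for every smooth vector field X (∇, ∇̂ the covariant derivatives of g, ĝ). Then for all smooth vector fields X and Z on U, g(∇_Z(λPX), PX) − g(λPX, ∇_Z(PX)) = 0 at every point of U, where λPX denotes the vector field with components λ^i_j P^j_k X^k and g(Y,W) = g_{ij} Y^i W^j. -/

import Mathlib

/-!
Statement 0 (Proposition 1 of Auckly–Kapitanski–White): if `g = ĝ λ` and the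
kinetic-energy matching condition `P(∇_X X − ∇̂_X X) = 0` holds on `U`, then
`g(∇_Z (λPX), PX) − g(λPX, ∇_Z (PX)) = 0` on `U` for all smooth `X, Z`.
Everything is written in local coordinates on an open set `U ⊆ ℝⁿ`.
-/

noncomputable section

open Matrix

/-- Partial derivative of a scalar function in the `i`-th coordinate direction. -/
def pderiv' {n : ℕ} (f : (Fin n → ℝ) → ℝ) (i : Fin n) (x : Fin n → ℝ) : ℝ :=
  fderiv ℝ f x (Pi.single i 1)

/-- Christoffel symbols `Γ^k_{ij}` of a metric `g`. -/
def christoffel {n : ℕ} (g : (Fin n → ℝ) → Matrix (Fin n) (Fin n) ℝ)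
    (k i j : Fin n) (x : Fin n → ℝ) : ℝ :=
  (1 / 2) * ∑ l, (g x)⁻¹ k l *
    (pderiv' (fun y => g y j l) i x + pderiv' (fun y => g y i l) j x -
      pderiv' (fun y => g y i j) l x)

/-- Covariant derivative `(∇_X Y)^k` of the vector field `Y` along `X`. -/
def covDeriv' {n : ℕ} (g : (Fin n → ℝ) → Matrix (Fin n) (Fin n) ℝ)
    (X Y : (Fin n → ℝ) → Fin n → ℝ) (x : Fin n → ℝ) (k : Fin n) : ℝ :=
  (∑ i, X x i * pderiv' (fun y => Y y k) i x) +
    ∑ i, ∑ j, christoffel g k i j x * X x i * Y x j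

/-- Pointwise application of a matrix-valued field to a vector field. -/
def mvec {n : ℕ} (A : (Fin n → ℝ) → Matrix (Fin n) (Fin n) ℝ)
    (X : (Fin n → ℝ) → Fin n → ℝ) (x : Fin n → ℝ) (i : Fin n) : ℝ :=
  ∑ j, A x i j * X x j

/-- Inner product `g(X, Y) = g_{ij} X^i Y^j` of two vector fields. -/
def gip {n : ℕ} (g : (Fin n → ℝ) → Matrix (Fin n) (Fin n) ℝ)
    (X Y : (Fin n → ℝ) → Fin n → ℝ) (x : Fin n → ℝ) : ℝ :=
  ∑ i, ∑ j, g x i j * X x i * Y x j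

variable {n : ℕ}

lemma pderiv'_congr {f h : (Fin n → ℝ) → ℝ} {x} (hfg : f =ᶠ[nhds x] h) (i : Fin n) :
    pderiv' f i x = pderiv' h i x := by
  unfold pderiv'; rw [Filter.EventuallyEq.fderiv_eq hfg]

lemma pderiv'_const (c : ℝ) (i : Fin n) (x) : pderiv' (fun _ => c) i x = 0 := by
  simp [pderiv']

lemma pderiv'_sum {ι} (s : Finset ι) (f : ι → (Fin n → ℝ) → ℝ) {x}
    (hf : ∀ i ∈ s, DifferentiableAt ℝ (f i) x) (l : Fin n) :
    pderiv' (fun y => ∑ i ∈ s, f i y) l x = ∑ i ∈ s, pderiv' (f i) l x := by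
  unfold pderiv'
  rw [fderiv_fun_sum hf]
  simp

lemma pderiv'_mul {f h : (Fin n → ℝ) → ℝ} {x} (hf : DifferentiableAt ℝ f x)
    (hh : DifferentiableAt ℝ h x) (l : Fin n) :
    pderiv' (fun y => f y * h y) l x = pderiv' f l x * h x + f x * pderiv' h l x := by
  unfold pderiv'
  rw [fderiv_fun_mul hf hh]
  simp
  ring


lemma compat (g : (Fin n → ℝ) → Matrix (Fin n) (Fin n) ℝ) (x : Fin n → ℝ)
    (hsym : (g x)ᵀ = g x) (hd : IsUnit (g x).det)
    (hswap : ∀ i j l, pderiv' (fun y => g y i j) l x = pderiv' (fun y => g y j i) l x)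
    (l i j : Fin n) :
    pderiv' (fun y => g y i j) l x =
      (∑ k, christoffel g k l i x * g x k j) + ∑ k, christoffel g k l j x * g x i k := by
  have hcontr : ∀ m j : Fin n, ∑ k, (g x)⁻¹ k m * g x k j = if m = j then 1 else 0 := by
    intro m j
    have h1 : ∑ k, (g x)⁻¹ k m * g x k j = ((g x)⁻¹ᵀ * g x) m j := by
      simp [Matrix.mul_apply]
    rw [h1, Matrix.transpose_nonsing_inv, hsym, Matrix.nonsing_inv_mul _ hd, Matrix.one_apply]
  have hcontr2 : ∀ i m : Fin n, ∑ k, g x i k * (g x)⁻¹ k m = if i = m then 1 else 0 := by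
    intro i m
    have h1 : ∑ k, g x i k * (g x)⁻¹ k m = (g x * (g x)⁻¹) i m := (Matrix.mul_apply).symm
    rw [h1, Matrix.mul_nonsing_inv _ hd, Matrix.one_apply]
  have e1 : ∑ k, christoffel g k l i x * g x k j
      = (1/2) * (pderiv' (fun y => g y i j) l x + pderiv' (fun y => g y l j) i x
          - pderiv' (fun y => g y l i) j x) := by
    unfold christoffel
    have : ∀ k, ((1:ℝ)/2 * ∑ m, (g x)⁻¹ k m *
        (pderiv' (fun y => g y i m) l x + pderiv' (fun y => g y l m) i x -
          pderiv' (fun y => g y l i) m x)) * g x k j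
      = ∑ m, (1/2) * ((g x)⁻¹ k m * g x k j) *
        (pderiv' (fun y => g y i m) l x + pderiv' (fun y => g y l m) i x -
          pderiv' (fun y => g y l i) m x) := by
      intro k; rw [Finset.mul_sum, Finset.sum_mul]
      exact Finset.sum_congr rfl fun m _ => by ring
    simp_rw [this]
    rw [Finset.sum_comm]
    have : ∀ m, (∑ k, (1:ℝ)/2 * ((g x)⁻¹ k m * g x k j) *
        (pderiv' (fun y => g y i m) l x + pderiv' (fun y => g y l m) i x -
          pderiv' (fun y => g y l i) m x))
      = (1/2) * (if m = j then 1 else 0) *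
        (pderiv' (fun y => g y i m) l x + pderiv' (fun y => g y l m) i x -
          pderiv' (fun y => g y l i) m x) := by
      intro m
      rw [← hcontr m j, Finset.mul_sum, Finset.sum_mul]
    simp_rw [this]
    simp
  have e2 : ∑ k, christoffel g k l j x * g x i k
      = (1/2) * (pderiv' (fun y => g y j i) l x + pderiv' (fun y => g y l i) j x
          - pderiv' (fun y => g y l j) i x) := by
    unfold christoffel
    have : ∀ k, ((1:ℝ)/2 * ∑ m, (g x)⁻¹ k m *
        (pderiv' (fun y => g y j m) l x + pderiv' (fun y => g y l m) j x -
          pderiv' (fun y => g y l j) m x)) * g x i k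
      = ∑ m, (1/2) * (g x i k * (g x)⁻¹ k m) *
        (pderiv' (fun y => g y j m) l x + pderiv' (fun y => g y l m) j x -
          pderiv' (fun y => g y l j) m x) := by
      intro k; rw [Finset.mul_sum, Finset.sum_mul]
      exact Finset.sum_congr rfl fun m _ => by ring
    simp_rw [this]
    rw [Finset.sum_comm]
    have : ∀ m, (∑ k, (1:ℝ)/2 * (g x i k * (g x)⁻¹ k m) *
        (pderiv' (fun y => g y j m) l x + pderiv' (fun y => g y l m) j x -
          pderiv' (fun y => g y l j) m x))
      = (1/2) * (if i = m then 1 else 0) *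
        (pderiv' (fun y => g y j m) l x + pderiv' (fun y => g y l m) j x -
          pderiv' (fun y => g y l j) m x) := by
      intro m
      rw [← hcontr2 i m, Finset.mul_sum, Finset.sum_mul]
    simp_rw [this]
    simp
  rw [e1, e2, hswap j i l]
  ring

lemma sum3_rot (F : Fin n → Fin n → Fin n → ℝ) :
    ∑ l, ∑ i, ∑ j, F l i j = ∑ i, ∑ j, ∑ l, F l i j := by
  rw [Finset.sum_comm]
  exact Finset.sum_congr rfl fun i _ => Finset.sum_comm

lemma sum4_a (F : Fin n → Fin n → Fin n → Fin n → ℝ) :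
    ∑ l, ∑ i, ∑ j, ∑ k, F l i j k = ∑ k, ∑ j, ∑ l, ∑ i, F l i j k := by
  calc ∑ l, ∑ i, ∑ j, ∑ k, F l i j k
      = ∑ l, ∑ i, ∑ k, ∑ j, F l i j k :=
        Finset.sum_congr rfl fun l _ => Finset.sum_congr rfl fun i _ => Finset.sum_comm
    _ = ∑ l, ∑ k, ∑ i, ∑ j, F l i j k :=
        Finset.sum_congr rfl fun l _ => Finset.sum_comm
    _ = ∑ k, ∑ l, ∑ i, ∑ j, F l i j k := Finset.sum_comm
    _ = ∑ k, ∑ l, ∑ j, ∑ i, F l i j k :=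
        Finset.sum_congr rfl fun k _ => Finset.sum_congr rfl fun l _ => Finset.sum_comm
    _ = ∑ k, ∑ j, ∑ l, ∑ i, F l i j k :=
        Finset.sum_congr rfl fun k _ => Finset.sum_comm

lemma sum4_b (F : Fin n → Fin n → Fin n → Fin n → ℝ) :
    ∑ l, ∑ i, ∑ j, ∑ k, F l i j k = ∑ i, ∑ k, ∑ l, ∑ j, F l i j k := by
  calc ∑ l, ∑ i, ∑ j, ∑ k, F l i j k
      = ∑ i, ∑ l, ∑ j, ∑ k, F l i j k := Finset.sum_comm
    _ = ∑ i, ∑ l, ∑ k, ∑ j, F l i j k :=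
        Finset.sum_congr rfl fun i _ => Finset.sum_congr rfl fun l _ => Finset.sum_comm
    _ = ∑ i, ∑ k, ∑ l, ∑ j, F l i j k :=
        Finset.sum_congr rfl fun i _ => Finset.sum_comm

lemma compat_contracted (g : (Fin n → ℝ) → Matrix (Fin n) (Fin n) ℝ)
    (Z A B : (Fin n → ℝ) → Fin n → ℝ) (x : Fin n → ℝ)
    (hsym : (g x)ᵀ = g x) (hd : IsUnit (g x).det)
    (hswap : ∀ i j l, pderiv' (fun y => g y i j) l x = pderiv' (fun y => g y j i) l x)
    (hgd : ∀ i j, DifferentiableAt ℝ (fun y => g y i j) x)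
    (hA : ∀ i, DifferentiableAt ℝ (fun y => A y i) x)
    (hB : ∀ i, DifferentiableAt ℝ (fun y => B y i) x) :
    ∑ l, Z x l * pderiv' (fun y => ∑ i, ∑ j, g y i j * A y i * B y j) l x
      = gip g (covDeriv' g Z A) B x + gip g A (covDeriv' g Z B) x := by
  have hder : ∀ l, pderiv' (fun y => ∑ i, ∑ j, g y i j * A y i * B y j) l x
      = ∑ i, ∑ j, (pderiv' (fun y => g y i j) l x * A x i * B x j
          + g x i j * pderiv' (fun y => A y i) l x * B x j
          + g x i j * A x i * pderiv' (fun y => B y j) l x) := by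
    intro l
    rw [pderiv'_sum Finset.univ _
      (fun i _ => DifferentiableAt.fun_sum fun j _ => ((hgd i j).fun_mul (hA i)).fun_mul (hB j)) l]
    refine Finset.sum_congr rfl fun i _ => ?_
    rw [pderiv'_sum Finset.univ _ (fun j _ => ((hgd i j).fun_mul (hA i)).fun_mul (hB j)) l]
    refine Finset.sum_congr rfl fun j _ => ?_
    rw [pderiv'_mul ((hgd i j).fun_mul (hA i)) (hB j) l, pderiv'_mul (hgd i j) (hA i) l]
    ring
  simp_rw [hder, compat g x hsym hd hswap]
  -- abbreviations
  set Γ : Fin n → Fin n → Fin n → ℝ := fun k l m => christoffel g k l m x with hΓ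
  set G' : Matrix (Fin n) (Fin n) ℝ := g x with hG
  set a : Fin n → ℝ := A x with ha
  set b : Fin n → ℝ := B x with hb
  set z : Fin n → ℝ := Z x with hz
  set dA : Fin n → Fin n → ℝ := fun l i => pderiv' (fun y => A y i) l x with hdA
  set dB : Fin n → Fin n → ℝ := fun l j => pderiv' (fun y => B y j) l x with hdB
  have stepA : ∑ l, z l * ∑ i, ∑ j,
        ((∑ k, Γ k l i * G' k j + ∑ k, Γ k l j * G' i k) * a i * b j
          + G' i j * dA l i * b j + G' i j * a i * dB l j)
      = (∑ l, ∑ i, ∑ j, ∑ k, z l * Γ k l i * G' k j * a i * b j)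
        + (∑ l, ∑ i, ∑ j, ∑ k, z l * Γ k l j * G' i k * a i * b j)
        + (∑ l, ∑ i, ∑ j, z l * G' i j * dA l i * b j)
        + (∑ l, ∑ i, ∑ j, z l * G' i j * a i * dB l j) := by
    rw [← Finset.sum_add_distrib, ← Finset.sum_add_distrib, ← Finset.sum_add_distrib]
    refine Finset.sum_congr rfl fun l _ => ?_
    rw [Finset.mul_sum, ← Finset.sum_add_distrib, ← Finset.sum_add_distrib,
      ← Finset.sum_add_distrib]
    refine Finset.sum_congr rfl fun i _ => ?_
    rw [Finset.mul_sum, ← Finset.sum_add_distrib, ← Finset.sum_add_distrib,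
      ← Finset.sum_add_distrib]
    refine Finset.sum_congr rfl fun j _ => ?_
    have e1 : ∑ k, z l * Γ k l i * G' k j * a i * b j
        = (∑ k, Γ k l i * G' k j) * (z l * (a i * b j)) := by
      rw [Finset.sum_mul]; exact Finset.sum_congr rfl fun k _ => by ring
    have e2 : ∑ k, z l * Γ k l j * G' i k * a i * b j
        = (∑ k, Γ k l j * G' i k) * (z l * (a i * b j)) := by
      rw [Finset.sum_mul]; exact Finset.sum_congr rfl fun k _ => by ring
    rw [e1, e2]; ring
  rw [stepA]
  -- now the right-hand side
  simp only [gip, covDeriv']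
  have r1 : ∑ i, ∑ j, G' i j *
        ((∑ l, z l * dA l i) + ∑ l, ∑ m, Γ i l m * z l * a m) * b j
      = (∑ i, ∑ j, ∑ l, z l * G' i j * dA l i * b j)
        + ∑ i, ∑ j, ∑ l, ∑ m, z l * Γ i l m * G' i j * a m * b j := by
    have h : ∀ i j, G' i j * ((∑ l, z l * dA l i) + ∑ l, ∑ m, Γ i l m * z l * a m) * b j
        = (∑ l, z l * G' i j * dA l i * b j)
          + ∑ l, ∑ m, z l * Γ i l m * G' i j * a m * b j := by
      intro i j
      have e1 : ∑ l, z l * G' i j * dA l i * b j = (∑ l, z l * dA l i) * (G' i j * b j) := by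
        rw [Finset.sum_mul]; exact Finset.sum_congr rfl fun l _ => by ring
      have e2 : ∑ l, ∑ m, z l * Γ i l m * G' i j * a m * b j
          = (∑ l, ∑ m, Γ i l m * z l * a m) * (G' i j * b j) := by
        rw [Finset.sum_mul]
        refine Finset.sum_congr rfl fun l _ => ?_
        rw [Finset.sum_mul]; exact Finset.sum_congr rfl fun m _ => by ring
      rw [e1, e2]; ring
    simp_rw [h]
    simp [Finset.sum_add_distrib]
  have r2 : ∑ i, ∑ j, G' i j * a i *
        ((∑ l, z l * dB l j) + ∑ l, ∑ m, Γ j l m * z l * b m)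
      = (∑ i, ∑ j, ∑ l, z l * G' i j * a i * dB l j)
        + ∑ i, ∑ j, ∑ l, ∑ m, z l * Γ j l m * G' i j * a i * b m := by
    have h : ∀ i j, G' i j * a i * ((∑ l, z l * dB l j) + ∑ l, ∑ m, Γ j l m * z l * b m)
        = (∑ l, z l * G' i j * a i * dB l j)
          + ∑ l, ∑ m, z l * Γ j l m * G' i j * a i * b m := by
      intro i j
      have e1 : ∑ l, z l * G' i j * a i * dB l j = (∑ l, z l * dB l j) * (G' i j * a i) := by
        rw [Finset.sum_mul]; exact Finset.sum_congr rfl fun l _ => by ring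
      have e2 : ∑ l, ∑ m, z l * Γ j l m * G' i j * a i * b m
          = (∑ l, ∑ m, Γ j l m * z l * b m) * (G' i j * a i) := by
        rw [Finset.sum_mul]
        refine Finset.sum_congr rfl fun l _ => ?_
        rw [Finset.sum_mul]; exact Finset.sum_congr rfl fun m _ => by ring
      rw [e1, e2]; ring
    simp_rw [h]
    simp [Finset.sum_add_distrib]
  rw [r1, r2]
  -- match the four pieces via reordering
  have p1 : ∑ l, ∑ i, ∑ j, ∑ k, z l * Γ k l i * G' k j * a i * b j
      = ∑ i, ∑ j, ∑ l, ∑ m, z l * Γ i l m * G' i j * a m * b j := by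
    rw [sum4_a (fun l i j k => z l * Γ k l i * G' k j * a i * b j)]
  have p2 : ∑ l, ∑ i, ∑ j, ∑ k, z l * Γ k l j * G' i k * a i * b j
      = ∑ i, ∑ j, ∑ l, ∑ m, z l * Γ j l m * G' i j * a i * b m := by
    rw [sum4_b (fun l i j k => z l * Γ k l j * G' i k * a i * b j)]
  have p3 : ∑ l, ∑ i, ∑ j, z l * G' i j * dA l i * b j
      = ∑ i, ∑ j, ∑ l, z l * G' i j * dA l i * b j :=
    sum3_rot _
  have p4 : ∑ l, ∑ i, ∑ j, z l * G' i j * a i * dB l j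
      = ∑ i, ∑ j, ∑ l, z l * G' i j * a i * dB l j :=
    sum3_rot _
  rw [p1, p2, p3, p4]
  ring

lemma mvec_apply (A : (Fin n → ℝ) → Matrix (Fin n) (Fin n) ℝ)
    (X : (Fin n → ℝ) → Fin n → ℝ) (x : Fin n → ℝ) :
    mvec A X x = A x *ᵥ X x := by
  ext i; simp [mvec, Matrix.mulVec, dotProduct]

lemma trip (M : Matrix (Fin n) (Fin n) ℝ) (u v : Fin n → ℝ) :
    ∑ i, ∑ j, M i j * u i * v j = u ⬝ᵥ M *ᵥ v := by
  simp only [dotProduct, Matrix.mulVec]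
  refine Finset.sum_congr rfl fun i _ => ?_
  rw [Finset.mul_sum]
  exact Finset.sum_congr rfl fun j _ => by ring

lemma dp_t (A : Matrix (Fin n) (Fin n) ℝ) (u v : Fin n → ℝ) :
    u ⬝ᵥ Aᵀ *ᵥ v = (A *ᵥ u) ⬝ᵥ v := by
  rw [Matrix.mulVec_transpose, dotProduct_comm, ← Matrix.dotProduct_mulVec,
    dotProduct_comm]

lemma gip_comm' (M : Matrix (Fin n) (Fin n) ℝ) (hsym : Mᵀ = M) (u v : Fin n → ℝ) :
    ∑ i, ∑ j, M i j * u i * v j = ∑ i, ∑ j, M i j * v i * u j := by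
  rw [Finset.sum_comm]
  refine Finset.sum_congr rfl fun i _ => Finset.sum_congr rfl fun j _ => ?_
  have h : M j i = M i j := by
    conv_lhs => rw [← hsym]
    rw [Matrix.transpose_apply]
  rw [h]; ring

lemma christoffel_symm' (g : (Fin n → ℝ) → Matrix (Fin n) (Fin n) ℝ) (x : Fin n → ℝ)
    (hswap : ∀ i j l, pderiv' (fun y => g y i j) l x = pderiv' (fun y => g y j i) l x)
    (k i j : Fin n) : christoffel g k i j x = christoffel g k j i x := by
  unfold christoffel
  refine congrArg _ (Finset.sum_congr rfl fun l _ => ?_)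
  rw [(hswap i j l).symm]
  ring


theorem statement0 {n : ℕ} (U : Set (Fin n → ℝ)) (hU : IsOpen U)
    (g gh lam P : (Fin n → ℝ) → Matrix (Fin n) (Fin n) ℝ)
    -- smoothness of all the fields on `U`
    (hgsm : ∀ i j, ContDiffOn ℝ (⊤ : ℕ∞) (fun x => g x i j) U)
    (hghsm : ∀ i j, ContDiffOn ℝ (⊤ : ℕ∞) (fun x => gh x i j) U)
    (hlamsm : ∀ i j, ContDiffOn ℝ (⊤ : ℕ∞) (fun x => lam x i j) U)
    (hPsm : ∀ i j, ContDiffOn ℝ (⊤ : ℕ∞) (fun x => P x i j) U)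
    -- `g` and `ĝ` are metrics (symmetric positive definite)
    (hgpos : ∀ x ∈ U, (g x).PosDef)
    (hghpos : ∀ x ∈ U, (gh x).PosDef)
    -- `g = ĝ λ`
    (hglam : ∀ x ∈ U, g x = gh x * lam x)
    -- `P` is a `g`-orthogonal projection
    (hPP : ∀ x ∈ U, P x * P x = P x)
    (hPsym : ∀ x ∈ U, (g x * P x)ᵀ = g x * P x)
    -- kinetic-energy matching condition `P(∇_X X − ∇̂_X X) = 0` for all smooth `X`
    (hmatch : ∀ X : (Fin n → ℝ) → Fin n → ℝ,
      (∀ k, ContDiffOn ℝ (⊤ : ℕ∞) (fun x => X x k) U) →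
      ∀ x ∈ U, ∀ i, (∑ j, P x i j * (covDeriv' g X X x j - covDeriv' gh X X x j)) = 0) :
    ∀ X Z : (Fin n → ℝ) → Fin n → ℝ,
      (∀ k, ContDiffOn ℝ (⊤ : ℕ∞) (fun x => X x k) U) →
      (∀ k, ContDiffOn ℝ (⊤ : ℕ∞) (fun x => Z x k) U) →
      ∀ x ∈ U,
        gip g (covDeriv' g Z (mvec lam (mvec P X))) (mvec P X) x -
          gip g (mvec lam (mvec P X)) (covDeriv' g Z (mvec P X)) x = 0 := by
  intro X Z hX hZ x hx
  have hmem := hU.mem_nhds hx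
  have hd : ∀ f : (Fin n → ℝ) → ℝ, ContDiffOn ℝ (⊤ : ℕ∞) f U → DifferentiableAt ℝ f x :=
    fun f hf => (hf.contDiffAt hmem).differentiableAt (by simp)
  have hsymU : ∀ y ∈ U, ∀ i j, g y i j = g y j i := by
    intro y hy i j
    have h := (hgpos y hy).isHermitian
    conv_lhs => rw [← h]
    simp [Matrix.conjTranspose_apply]
  have hsymUh : ∀ y ∈ U, ∀ i j, gh y i j = gh y j i := by
    intro y hy i j
    have h := (hghpos y hy).isHermitian
    conv_lhs => rw [← h]
    simp [Matrix.conjTranspose_apply]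
  have hswapg : ∀ i j l, pderiv' (fun y => g y i j) l x = pderiv' (fun y => g y j i) l x :=
    fun i j l => pderiv'_congr (Filter.eventuallyEq_of_mem hmem fun y hy => hsymU y hy i j) l
  have hswapgh : ∀ i j l, pderiv' (fun y => gh y i j) l x = pderiv' (fun y => gh y j i) l x :=
    fun i j l => pderiv'_congr (Filter.eventuallyEq_of_mem hmem fun y hy => hsymUh y hy i j) l
  have hGsym : (g x)ᵀ = g x := by
    ext i j; rw [Matrix.transpose_apply]; exact hsymU x hx j i
  have hGhsym : (gh x)ᵀ = gh x := by
    ext i j; rw [Matrix.transpose_apply]; exact hsymUh x hx j i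
  have hdet : IsUnit (g x).det := isUnit_iff_ne_zero.mpr (ne_of_gt (hgpos x hx).det_pos)
  have hdeth : IsUnit (gh x).det := isUnit_iff_ne_zero.mpr (ne_of_gt (hghpos x hx).det_pos)
  -- the matching tensor vanishes
  have hQ : ∀ k i j, (∑ m, P x k m *
      (christoffel g m i j x - christoffel gh m i j x)) = 0 := by
    have hBc : ∀ (c : Fin n → ℝ) (k : Fin n),
        ∑ i, ∑ j, (∑ m, P x k m * (christoffel g m i j x - christoffel gh m i j x))
          * c i * c j = 0 := by
      intro c k
      have hm := hmatch (fun _ => c) (fun k => contDiffOn_const) x hx k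
      have hcov : ∀ m, covDeriv' g (fun _ => c) (fun _ => c) x m
          - covDeriv' gh (fun _ => c) (fun _ => c) x m
          = ∑ i, ∑ j, (christoffel g m i j x - christoffel gh m i j x) * c i * c j := by
        intro m
        unfold covDeriv'
        have h1 : ∑ i, ∑ j, (christoffel g m i j x - christoffel gh m i j x) * c i * c j
            = (∑ i, ∑ j, christoffel g m i j x * c i * c j)
              - ∑ i, ∑ j, christoffel gh m i j x * c i * c j := by
          rw [← Finset.sum_sub_distrib]
          refine Finset.sum_congr rfl fun i _ => ?_
          rw [← Finset.sum_sub_distrib]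
          exact Finset.sum_congr rfl fun j _ => by ring
        rw [h1]
        simp only [pderiv'_const, mul_zero, Finset.sum_const_zero, zero_add]
      have h0 : ∑ m, P x k m * (∑ i, ∑ j,
          (christoffel g m i j x - christoffel gh m i j x) * c i * c j) = 0 := by
        rw [← hm]
        exact Finset.sum_congr rfl fun m _ => by rw [hcov m]
      rw [← h0]
      have hpush : ∀ m, P x k m * (∑ i, ∑ j,
          (christoffel g m i j x - christoffel gh m i j x) * c i * c j)
          = ∑ i, ∑ j, P x k m * (christoffel g m i j x - christoffel gh m i j x)
              * c i * c j := by
        intro m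
        rw [Finset.mul_sum]
        refine Finset.sum_congr rfl fun i _ => ?_
        rw [Finset.mul_sum]
        exact Finset.sum_congr rfl fun j _ => by ring
      simp_rw [hpush]
      rw [sum3_rot (fun m i j => P x k m *
        (christoffel g m i j x - christoffel gh m i j x) * c i * c j)]
      refine Finset.sum_congr rfl fun i _ => Finset.sum_congr rfl fun j _ => ?_
      rw [Finset.sum_mul, Finset.sum_mul]
    have hQsym : ∀ k i j, (∑ m, P x k m *
        (christoffel g m i j x - christoffel gh m i j x))
        = ∑ m, P x k m * (christoffel g m j i x - christoffel gh m j i x) := by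
      intro k i j
      refine Finset.sum_congr rfl fun m _ => ?_
      rw [christoffel_symm' g x hswapg m i j, christoffel_symm' gh x hswapgh m i j]
    have heval : ∀ (k a b : Fin n), ∑ i, ∑ j, (∑ m, P x k m *
        (christoffel g m i j x - christoffel gh m i j x))
          * (Pi.single a 1 : Fin n → ℝ) i * (Pi.single b 1 : Fin n → ℝ) j
        = ∑ m, P x k m * (christoffel g m a b x - christoffel gh m a b x) := by
      intro k a b
      simp [Pi.single_apply, mul_ite, ite_mul, mul_one, mul_zero, zero_mul,
        Finset.sum_ite_eq', Finset.sum_ite_eq]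
    intro k a b
    have e1 := hBc (Pi.single a 1 : Fin n → ℝ) k
    have e2 := hBc (Pi.single b 1 : Fin n → ℝ) k
    have e3 := hBc (Pi.single a 1 + Pi.single b 1) k
    have hexp : ∑ i, ∑ j, (∑ m, P x k m *
        (christoffel g m i j x - christoffel gh m i j x))
          * ((Pi.single a 1 + Pi.single b 1 : Fin n → ℝ)) i
          * ((Pi.single a 1 + Pi.single b 1 : Fin n → ℝ)) j
        = (∑ i, ∑ j, (∑ m, P x k m * (christoffel g m i j x - christoffel gh m i j x))
            * (Pi.single a 1 : Fin n → ℝ) i * (Pi.single a 1 : Fin n → ℝ) j)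
          + (∑ i, ∑ j, (∑ m, P x k m * (christoffel g m i j x - christoffel gh m i j x))
            * (Pi.single a 1 : Fin n → ℝ) i * (Pi.single b 1 : Fin n → ℝ) j)
          + (∑ i, ∑ j, (∑ m, P x k m * (christoffel g m i j x - christoffel gh m i j x))
            * (Pi.single b 1 : Fin n → ℝ) i * (Pi.single a 1 : Fin n → ℝ) j)
          + (∑ i, ∑ j, (∑ m, P x k m * (christoffel g m i j x - christoffel gh m i j x))
            * (Pi.single b 1 : Fin n → ℝ) i * (Pi.single b 1 : Fin n → ℝ) j) := by
      have h : ∀ i j, (∑ m, P x k m * (christoffel g m i j x - christoffel gh m i j x))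
          * ((Pi.single a 1 + Pi.single b 1 : Fin n → ℝ)) i
          * ((Pi.single a 1 + Pi.single b 1 : Fin n → ℝ)) j
          = (∑ m, P x k m * (christoffel g m i j x - christoffel gh m i j x))
              * (Pi.single a 1 : Fin n → ℝ) i * (Pi.single a 1 : Fin n → ℝ) j
            + (∑ m, P x k m * (christoffel g m i j x - christoffel gh m i j x))
              * (Pi.single a 1 : Fin n → ℝ) i * (Pi.single b 1 : Fin n → ℝ) j
            + (∑ m, P x k m * (christoffel g m i j x - christoffel gh m i j x))
              * (Pi.single b 1 : Fin n → ℝ) i * (Pi.single a 1 : Fin n → ℝ) j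
            + (∑ m, P x k m * (christoffel g m i j x - christoffel gh m i j x))
              * (Pi.single b 1 : Fin n → ℝ) i * (Pi.single b 1 : Fin n → ℝ) j := by
        intro i j
        simp only [Pi.add_apply]
        ring
      simp_rw [h, Finset.sum_add_distrib]
    rw [e3, heval k a a, heval k a b, heval k b a, heval k b b] at hexp
    rw [heval k a a] at e1
    rw [heval k b b] at e2
    have hs := hQsym k a b
    linarith
  -- differentiability at x of the relevant component functions
  have hYd : ∀ k, DifferentiableAt ℝ (fun y => mvec P X y k) x := fun k =>
    DifferentiableAt.fun_sum fun j _ => (hd _ (hPsm k j)).fun_mul (hd _ (hX j))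
  have hWd : ∀ k, DifferentiableAt ℝ (fun y => mvec lam (mvec P X) y k) x := fun k =>
    DifferentiableAt.fun_sum fun j _ => (hd _ (hlamsm k j)).fun_mul (hYd j)
  have hgd : ∀ i j, DifferentiableAt ℝ (fun y => g y i j) x := fun i j => hd _ (hgsm i j)
  have hghd : ∀ i j, DifferentiableAt ℝ (fun y => gh y i j) x := fun i j => hd _ (hghsm i j)
  have key1 := compat_contracted g Z (mvec lam (mvec P X)) (mvec P X) x
    hGsym hdet hswapg hgd hWd hYd
  have key2 := compat_contracted gh Z (mvec lam (mvec P X)) (mvec lam (mvec P X)) x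
    hGhsym hdeth hswapgh hghd hWd hWd
  -- the two scalar functions agree on U
  have hFeq : ∀ y ∈ U, ∑ i, ∑ j, g y i j * mvec lam (mvec P X) y i * mvec P X y j
      = ∑ i, ∑ j, gh y i j * mvec lam (mvec P X) y i * mvec lam (mvec P X) y j := by
    intro y hy
    have hgy : ∀ i j, g y i j = ∑ m, gh y i m * lam y m j := fun i j => by
      rw [hglam y hy, Matrix.mul_apply]
    calc ∑ i, ∑ j, g y i j * mvec lam (mvec P X) y i * mvec P X y j
        = ∑ i, ∑ j, ∑ m, gh y i m * lam y m j * mvec lam (mvec P X) y i * mvec P X y j := by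
          refine Finset.sum_congr rfl fun i _ => Finset.sum_congr rfl fun j _ => ?_
          rw [hgy i j, Finset.sum_mul, Finset.sum_mul]
      _ = ∑ i, ∑ m, ∑ j, gh y i m * lam y m j * mvec lam (mvec P X) y i * mvec P X y j :=
          Finset.sum_congr rfl fun i _ => Finset.sum_comm
      _ = ∑ i, ∑ m, gh y i m * mvec lam (mvec P X) y i * mvec lam (mvec P X) y m := by
          refine Finset.sum_congr rfl fun i _ => Finset.sum_congr rfl fun m _ => ?_
          have hWm : mvec lam (mvec P X) y m = ∑ j, lam y m j * mvec P X y j := rfl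
          rw [hWm, Finset.mul_sum]
          exact Finset.sum_congr rfl fun j _ => by ring
  have hFd : ∀ l, pderiv'
      (fun y => ∑ i, ∑ j, g y i j * mvec lam (mvec P X) y i * mvec P X y j) l x
      = pderiv' (fun y => ∑ i, ∑ j,
          gh y i j * mvec lam (mvec P X) y i * mvec lam (mvec P X) y j) l x :=
    fun l => pderiv'_congr (Filter.eventuallyEq_of_mem hmem hFeq) l
  have main_eq : gip g (covDeriv' g Z (mvec lam (mvec P X))) (mvec P X) x
      + gip g (mvec lam (mvec P X)) (covDeriv' g Z (mvec P X)) x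
      = gip gh (covDeriv' gh Z (mvec lam (mvec P X))) (mvec lam (mvec P X)) x
        + gip gh (mvec lam (mvec P X)) (covDeriv' gh Z (mvec lam (mvec P X))) x := by
    rw [← key1, ← key2]
    exact Finset.sum_congr rfl fun l _ => by rw [hFd l]
  -- projection facts at x
  have hPy : P x *ᵥ mvec P X x = mvec P X x := by
    rw [mvec_apply, Matrix.mulVec_mulVec, hPP x hx]
  have hGP : (P x)ᵀ *ᵥ (g x *ᵥ mvec P X x) = g x *ᵥ mvec P X x := by
    rw [Matrix.mulVec_mulVec]
    have h1 : (P x)ᵀ * g x = g x * P x := by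
      rw [← hPsym x hx, Matrix.transpose_mul, hGsym]
    rw [h1, ← Matrix.mulVec_mulVec, hPy]
  -- P(∇ - ∇̂) of W vanishes
  have hPch : P x *ᵥ covDeriv' gh Z (mvec lam (mvec P X)) x
      = P x *ᵥ covDeriv' g Z (mvec lam (mvec P X)) x := by
    ext k
    have hdiff : ∀ m, covDeriv' g Z (mvec lam (mvec P X)) x m
        - covDeriv' gh Z (mvec lam (mvec P X)) x m
        = ∑ i, ∑ j, (christoffel g m i j x - christoffel gh m i j x) * Z x i
            * mvec lam (mvec P X) x j := by
      intro m
      unfold covDeriv'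
      have h1 : ∑ i, ∑ j, (christoffel g m i j x - christoffel gh m i j x) * Z x i
            * mvec lam (mvec P X) x j
          = (∑ i, ∑ j, christoffel g m i j x * Z x i * mvec lam (mvec P X) x j)
            - ∑ i, ∑ j, christoffel gh m i j x * Z x i * mvec lam (mvec P X) x j := by
        rw [← Finset.sum_sub_distrib]
        refine Finset.sum_congr rfl fun i _ => ?_
        rw [← Finset.sum_sub_distrib]
        exact Finset.sum_congr rfl fun j _ => by ring
      rw [h1]
      ring
    have hz : ∑ m, P x k m * (covDeriv' g Z (mvec lam (mvec P X)) x m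
        - covDeriv' gh Z (mvec lam (mvec P X)) x m) = 0 := by
      simp_rw [hdiff]
      have hpush : ∀ m, P x k m * ∑ i, ∑ j,
          (christoffel g m i j x - christoffel gh m i j x) * Z x i
            * mvec lam (mvec P X) x j
          = ∑ i, ∑ j, P x k m * (christoffel g m i j x - christoffel gh m i j x)
              * Z x i * mvec lam (mvec P X) x j := by
        intro m
        rw [Finset.mul_sum]
        refine Finset.sum_congr rfl fun i _ => ?_
        rw [Finset.mul_sum]
        exact Finset.sum_congr rfl fun j _ => by ring
      simp_rw [hpush]
      rw [sum3_rot (fun m i j => P x k m *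
        (christoffel g m i j x - christoffel gh m i j x) * Z x i
          * mvec lam (mvec P X) x j)]
      refine Finset.sum_eq_zero fun i _ => Finset.sum_eq_zero fun j _ => ?_
      have h2 : ∑ m, P x k m * (christoffel g m i j x - christoffel gh m i j x)
            * Z x i * mvec lam (mvec P X) x j
          = (∑ m, P x k m * (christoffel g m i j x - christoffel gh m i j x))
            * (Z x i * mvec lam (mvec P X) x j) := by
        rw [Finset.sum_mul]
        exact Finset.sum_congr rfl fun m _ => by ring
      rw [h2, hQ k i j]
      ring
    have h3 : (∑ m, P x k m * covDeriv' g Z (mvec lam (mvec P X)) x m)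
        - ∑ m, P x k m * covDeriv' gh Z (mvec lam (mvec P X)) x m = 0 := by
      rw [← Finset.sum_sub_distrib, ← hz]
      exact Finset.sum_congr rfl fun m _ => by ring
    have h4 : ∀ (v : Fin n → ℝ), (P x *ᵥ v) k = ∑ m, P x k m * v m := fun v => by
      simp [Matrix.mulVec, dotProduct]
    rw [h4, h4]
    linarith
  -- chain : gh-inner product equals the g-one
  have hT : gip gh (covDeriv' gh Z (mvec lam (mvec P X))) (mvec lam (mvec P X)) x
      = gip g (covDeriv' g Z (mvec lam (mvec P X))) (mvec P X) x := by
    unfold gip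
    rw [trip, trip]
    have hWx : mvec lam (mvec P X) x = lam x *ᵥ mvec P X x := mvec_apply lam (mvec P X) x
    rw [hWx, Matrix.mulVec_mulVec, ← hglam x hx]
    rw [← hGP, dp_t, hPch, ← dp_t]
  have hswapT : gip gh (mvec lam (mvec P X)) (covDeriv' gh Z (mvec lam (mvec P X))) x
      = gip gh (covDeriv' gh Z (mvec lam (mvec P X))) (mvec lam (mvec P X)) x := by
    unfold gip
    exact gip_comm' (gh x) hGhsym _ _
  rw [hswapT, hT] at main_eq
  linarith
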